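/- Let E, F be Banach spaces and K ⊆ E compact convex. The space C^∞(E ⊇ K, F) of Whitney jets on K, i.e., sequences f = (f^k)_k of continuous maps f^k : K → L^k_{sym}(E,F) with all remainder seminorms |||f|||_{n,k} finite, is complete (a Fréchet space) with respect to the seminorms ‖f‖_n := sup_{x∈K} ‖f^n(x)‖ and |||f|||_{n,k} := sup_{x≠y∈K} (n+1)! ‖(R_y^n f)^k(x)‖ / ‖x−y‖^{n+1}. -/

import Mathlib

open Finset

variable {E F : Type*} [NormedAddCommGroup E] [NormedSpace ℝ E]
  [NormedAddCommGroup F] [NormedSpace ℝ F]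

/-- An infinite jet on a subset of `E`: for each `k` a (symmetric) continuous
`k`-linear map valued function. -/
def WhitneyJet (E F : Type*) [NormedAddCommGroup E] [NormedSpace ℝ E]
    [NormedAddCommGroup F] [NormedSpace ℝ F] :=
  ∀ k : ℕ, E → ContinuousMultilinearMap ℝ (fun _ : Fin k => E) F

/-- The Taylor remainder `(R_y^n f)^k (x)` of a jet, applied to vectors `v`. -/
noncomputable def jetRemainder (f : WhitneyJet E F) (n k : ℕ) (x y : E) (v : Fin k → E) : F :=
  f k x v - ∑ j ∈ Finset.range (n + 1), ((Nat.factorial j : ℝ)⁻¹) •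
    f (j + k) y (Fin.append (fun _ : Fin j => x - y) v)

/-- `‖f‖_n ≤ c` on `K`. -/
def jetNormLe (K : Set E) (f : WhitneyJet E F) (n : ℕ) (c : ℝ) : Prop :=
  ∀ a ∈ K, ‖f n a‖ ≤ c

/-- `|||f|||_{n,k} ≤ c` on `K`. -/
def jetRemLe (K : Set E) (f : WhitneyJet E F) (n k : ℕ) (c : ℝ) : Prop :=
  ∀ x ∈ K, ∀ y ∈ K, x ≠ y → ∀ v : Fin k → E, (∀ i, ‖v i‖ ≤ 1) →
    (Nat.factorial (n + 1) : ℝ) * ‖jetRemainder f n k x y v‖ ≤ c * ‖x - y‖ ^ (n + 1)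

/-- Difference of jets. -/
def jetSub (f g : WhitneyJet E F) : WhitneyJet E F := fun k a => f k a - g k a

/-- Membership in the space `C^∞(E ⊇ K, F)` of Whitney jets on `K`: continuity
of all components and finiteness of all seminorms. -/
def IsWhitneyJet (K : Set E) (f : WhitneyJet E F) : Prop :=
  (∀ k, ContinuousOn (fun a => f k a) K) ∧
  (∀ n, ∃ c : ℝ, jetNormLe K f n c) ∧
  (∀ n k, ∃ c : ℝ, jetRemLe K f n k c)


theorem jetRemainder_sub' (f g : WhitneyJet E F) (n k : ℕ) (x y : E) (v : Fin k → E) :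
    jetRemainder (jetSub f g) n k x y v
      = jetRemainder f n k x y v - jetRemainder g n k x y v := by
  simp only [jetRemainder, jetSub, ContinuousMultilinearMap.sub_apply, smul_sub,
    Finset.sum_sub_distrib]
  abel

/-- The space of Whitney jets on a compact convex subset `K` of a Banach space,
with values in a Banach space, is complete: every sequence which is Cauchy for
all seminorms `‖·‖_n` and `|||·|||_{n,k}` converges in all these seminorms to a
Whitney jet. -/
theorem whitneyJet_complete
    [CompleteSpace E] [CompleteSpace F]
    (K : Set E) (hK : IsCompact K) (hKconv : Convex ℝ K)
    (Fs : ℕ → WhitneyJet E F) (hmem : ∀ p, IsWhitneyJet K (Fs p))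
    (hCq : ∀ n : ℕ, ∀ ε > (0 : ℝ), ∃ N : ℕ, ∀ p ≥ N, ∀ q ≥ N,
      jetNormLe K (jetSub (Fs p) (Fs q)) n ε)
    (hCr : ∀ n k : ℕ, ∀ ε > (0 : ℝ), ∃ N : ℕ, ∀ p ≥ N, ∀ q ≥ N,
      jetRemLe K (jetSub (Fs p) (Fs q)) n k ε) :
    ∃ f : WhitneyJet E F, IsWhitneyJet K f ∧
      (∀ n : ℕ, ∀ ε > (0 : ℝ), ∃ N : ℕ, ∀ p ≥ N,
        jetNormLe K (jetSub (Fs p) f) n ε) ∧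
      (∀ n k : ℕ, ∀ ε > (0 : ℝ), ∃ N : ℕ, ∀ p ≥ N,
        jetRemLe K (jetSub (Fs p) f) n k ε) := by

  classical
  set f : WhitneyJet E F := fun k x => Filter.limUnder Filter.atTop (fun p => Fs p k x) with hf
  have hcau : ∀ k, ∀ x ∈ K, CauchySeq (fun p => Fs p k x) := by
    intro k x hx
    rw [Metric.cauchySeq_iff']
    intro ε hε
    obtain ⟨N, hN⟩ := hCq k (ε / 2) (by linarith)
    refine ⟨N, fun n hn => lt_of_le_of_lt ?_ (by linarith : ε / 2 < ε)⟩
    rw [dist_eq_norm]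
    exact hN n hn N le_rfl x hx
  have htend : ∀ k, ∀ x ∈ K, Filter.Tendsto (fun p => Fs p k x) Filter.atTop (nhds (f k x)) :=
    fun k x hx => (hcau k x hx).tendsto_limUnder
  have hunif : ∀ k, ∀ ε > (0 : ℝ), ∃ N, ∀ p ≥ N, ∀ x ∈ K, ‖Fs p k x - f k x‖ ≤ ε := by
    intro k ε hε
    obtain ⟨N, hN⟩ := hCq k ε hε
    refine ⟨N, fun p hp x hx => ?_⟩
    have h1 : Filter.Tendsto (fun q => ‖Fs p k x - Fs q k x‖) Filter.atTop
        (nhds ‖Fs p k x - f k x‖) := (Filter.Tendsto.sub tendsto_const_nhds (htend k x hx)).norm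
    refine le_of_tendsto h1 ?_
    filter_upwards [Filter.eventually_ge_atTop N] with q hq
    exact hN p hp q hq x hx
  have hremtend : ∀ n k, ∀ x ∈ K, ∀ y ∈ K, ∀ v : Fin k → E,
      Filter.Tendsto (fun p => jetRemainder (Fs p) n k x y v) Filter.atTop
        (nhds (jetRemainder f n k x y v)) := by
    intro n k x hx y hy v
    unfold jetRemainder
    refine Filter.Tendsto.sub ?_ ?_
    · exact ((ContinuousMultilinearMap.apply ℝ (fun _ : Fin k => E) F v).continuous.tendsto
        _).comp (htend k x hx)
    · refine tendsto_finset_sum _ fun j _ => Filter.Tendsto.const_smul ?_ _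
      exact ((ContinuousMultilinearMap.apply ℝ (fun _ : Fin (j + k) => E) F
        (Fin.append (fun _ : Fin j => x - y) v)).continuous.tendsto _).comp (htend (j + k) y hy)
  have hremunif : ∀ n k, ∀ ε > (0 : ℝ), ∃ N, ∀ p ≥ N, jetRemLe K (jetSub (Fs p) f) n k ε := by
    intro n k ε hε
    obtain ⟨N, hN⟩ := hCr n k ε hε
    refine ⟨N, fun p hp x hx y hy hxy v hv => ?_⟩
    rw [jetRemainder_sub']
    have h1 : Filter.Tendsto (fun q => ((n + 1).factorial : ℝ) *
        ‖jetRemainder (Fs p) n k x y v - jetRemainder (Fs q) n k x y v‖) Filter.atTop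
        (nhds (((n + 1).factorial : ℝ) *
          ‖jetRemainder (Fs p) n k x y v - jetRemainder f n k x y v‖)) :=
      Filter.Tendsto.const_mul _
        (Filter.Tendsto.sub tendsto_const_nhds (hremtend n k x hx y hy v)).norm
    refine le_of_tendsto h1 ?_
    filter_upwards [Filter.eventually_ge_atTop N] with q hq
    have h2 := hN p hp q hq x hx y hy hxy v hv
    rwa [jetRemainder_sub'] at h2
  refine ⟨f, ⟨?_, ?_, ?_⟩, ?_, ?_⟩
  · intro k
    have huc : TendstoUniformlyOn (fun p x => Fs p k x) (fun x => f k x) Filter.atTop K := by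
      rw [Metric.tendstoUniformlyOn_iff]
      intro ε hε
      obtain ⟨N, hN⟩ := hunif k (ε / 2) (by linarith)
      filter_upwards [Filter.eventually_ge_atTop N] with p hp x hx
      rw [dist_comm, dist_eq_norm]
      exact lt_of_le_of_lt (hN p hp x hx) (by linarith)
    exact huc.continuousOn (Filter.Eventually.of_forall fun p => (hmem p).1 k).frequently
  · intro n
    obtain ⟨N, hN⟩ := hunif n 1 one_pos
    obtain ⟨c, hc⟩ := (hmem N).2.1 n
    refine ⟨c + 1, fun a ha => ?_⟩
    have heq : f n a = Fs N n a - (Fs N n a - f n a) := by abel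
    calc ‖f n a‖ = ‖Fs N n a - (Fs N n a - f n a)‖ := by rw [← heq]
      _ ≤ ‖Fs N n a‖ + ‖Fs N n a - f n a‖ := norm_sub_le _ _
      _ ≤ c + 1 := add_le_add (hc a ha) (hN N le_rfl a ha)
  · intro n k
    obtain ⟨N, hN⟩ := hremunif n k 1 one_pos
    obtain ⟨c, hc⟩ := (hmem N).2.2 n k
    refine ⟨c + 1, fun x hx y hy hxy v hv => ?_⟩
    have h1 := hc x hx y hy hxy v hv
    have h2 := hN N le_rfl x hx y hy hxy v hv
    rw [jetRemainder_sub'] at h2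
    have heq : jetRemainder f n k x y v = jetRemainder (Fs N) n k x y v -
        (jetRemainder (Fs N) n k x y v - jetRemainder f n k x y v) := by abel
    calc ((n + 1).factorial : ℝ) * ‖jetRemainder f n k x y v‖
        = ((n + 1).factorial : ℝ) * ‖jetRemainder (Fs N) n k x y v -
          (jetRemainder (Fs N) n k x y v - jetRemainder f n k x y v)‖ := by rw [← heq]
      _ ≤ ((n + 1).factorial : ℝ) * (‖jetRemainder (Fs N) n k x y v‖ +
          ‖jetRemainder (Fs N) n k x y v - jetRemainder f n k x y v‖) :=
        mul_le_mul_of_nonneg_left (norm_sub_le _ _) (by positivity)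
      _ = ((n + 1).factorial : ℝ) * ‖jetRemainder (Fs N) n k x y v‖ +
          ((n + 1).factorial : ℝ) * ‖jetRemainder (Fs N) n k x y v -
            jetRemainder f n k x y v‖ := mul_add _ _ _
      _ ≤ c * ‖x - y‖ ^ (n + 1) + 1 * ‖x - y‖ ^ (n + 1) := add_le_add h1 h2
      _ = (c + 1) * ‖x - y‖ ^ (n + 1) := by ring
  · intro n ε hε
    obtain ⟨N, hN⟩ := hunif n ε hε
    exact ⟨N, fun p hp a ha => hN p hp a ha⟩
  · exact hremunif
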